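/- arXiv:2102.12534 — 7 statements merged into one kernel-verified Lean document; each statement's English description precedes it below -/
import Mathlib

section
/- Let n_A ≥ 1, d = 2^{n_A}, and let ρ be a density matrix on ℂ^d with eigenvalues λ_1, …, λ_d. Then the trace distance between ρ and the maximally mixed state (1/d)·I, which equals (1/2)·∑_{i=1}^d |λ_i − 1/d|, is bounded above by √((n_A − S(ρ))/2), where S(ρ) = −∑_{i=1}^d λ_i log₂ λ_i is the von Neumann entropy of ρ in bits. -/
open Real Finset
open scoped ComplexOrder


private lemma kderiv {x : ℝ} (hx0 : 0 < x) :
    HasDerivAt (fun t : ℝ => (t+1) * Real.log t - 2*(t-1))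
      (Real.log x + (x+1) * x⁻¹ - 2) x := by
  have h1 : HasDerivAt (fun t : ℝ => (t+1) * Real.log t)
      (1 * Real.log x + (x+1) * x⁻¹) x :=
    (((hasDerivAt_id x).add_const 1)).mul (Real.hasDerivAt_log hx0.ne')
  have h2 : HasDerivAt (fun t : ℝ => 2*(t-1)) 2 x := by
    simpa using ((hasDerivAt_id x).sub_const 1).const_mul 2
  exact (h1.sub h2).congr_deriv (by ring)

private lemma k_mono : MonotoneOn (fun t : ℝ => (t+1) * Real.log t - 2*(t-1)) (Set.Ioi 0) := by
  apply monotoneOn_of_deriv_nonneg (convex_Ioi 0)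
  · apply ContinuousOn.sub
    · exact ContinuousOn.mul (by fun_prop) (Real.continuousOn_log.mono (by
        intro x hx; simp at hx ⊢; linarith))
    · fun_prop
  · intro x hx
    rw [interior_Ioi] at hx
    exact (kderiv hx).differentiableAt.differentiableWithinAt
  · intro x hx
    rw [interior_Ioi] at hx
    rw [(kderiv hx).deriv]
    have hx0 : (0:ℝ) < x := hx
    have h1 := Real.one_sub_inv_le_log_of_pos hx0
    have hxi : (x+1) * x⁻¹ = 1 + x⁻¹ := by
      rw [add_mul, mul_inv_cancel₀ hx0.ne', one_mul]
    rw [hxi]; linarith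

private lemma hderiv {x : ℝ} (hx0 : 0 < x) :
    HasDerivAt (fun t : ℝ => 2*(t+2)*(t*Real.log t - t + 1) - 3*(t-1)^2)
      (4*((x+1) * Real.log x - 2*(x-1))) x := by
  have h1 : HasDerivAt (fun t : ℝ => t*Real.log t - t + 1) (Real.log x + 1 - 1) x :=
    ((Real.hasDerivAt_mul_log hx0.ne').sub (hasDerivAt_id x)).add_const 1
  have h2 : HasDerivAt (fun t : ℝ => 2*(t+2)) 2 x := by
    simpa using ((hasDerivAt_id x).add_const 2).const_mul 2
  have h3 : HasDerivAt (fun t : ℝ => 2*(t+2)*(t*Real.log t - t + 1))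
      (2*(x*Real.log x - x + 1) + (2*(x+2))*(Real.log x + 1 - 1)) x := h2.mul h1
  have h4 : HasDerivAt (fun t : ℝ => 3*(t-1)^2) (3*(2*(x-1))) x := by
    simpa using (((hasDerivAt_id x).sub_const 1).pow 2).const_mul 3
  have := h3.sub h4
  exact this.congr_deriv (by ring)

/-- key pointwise inequality `2(t+2)(t log t - t + 1) ≥ 3(t-1)²` for `t > 0`. -/
private lemma key_pointwise {t : ℝ} (ht : 0 < t) :
    3*(t-1)^2 ≤ 2*(t+2)*(t*Real.log t - t + 1) := by
  set h : ℝ → ℝ := fun t => 2*(t+2)*(t*Real.log t - t + 1) - 3*(t-1)^2 with hh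
  have hcont : ContinuousOn h (Set.Ioi 0) := by
    apply ContinuousOn.sub
    · apply ContinuousOn.mul (by fun_prop)
      have hlc : ContinuousOn (fun t : ℝ => t * Real.log t) (Set.Ioi 0) :=
        ContinuousOn.mul (by fun_prop) (Real.continuousOn_log.mono (by
          intro x hx; simp at hx ⊢; linarith))
      exact (hlc.sub (by fun_prop)).add continuousOn_const
    · fun_prop
  have h1 : h 1 = 0 := by simp [hh]
  have key : 0 ≤ h t := by
    rcases le_total 1 t with hle | hle
    · have hmono : MonotoneOn h (Set.Ici 1) := by
        apply monotoneOn_of_deriv_nonneg (convex_Ici 1)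
        · exact hcont.mono (fun x hx => by simp at hx ⊢; linarith)
        · intro x hx
          rw [interior_Ici] at hx
          exact (hderiv (by simp at hx; linarith)).differentiableAt.differentiableWithinAt
        · intro x hx
          rw [interior_Ici] at hx
          have hx1 : (1:ℝ) ≤ x := le_of_lt hx
          have hx0 : (0:ℝ) < x := by linarith
          rw [(hderiv hx0).deriv]
          have hk : (1+1) * Real.log 1 - 2*(1-1) ≤ (x+1) * Real.log x - 2*(x-1) :=
            k_mono (Set.mem_Ioi.mpr one_pos) (Set.mem_Ioi.mpr hx0) hx1
          rw [Real.log_one] at hk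
          nlinarith
      have := hmono Set.self_mem_Ici (Set.mem_Ici.mpr hle) hle
      rw [h1] at this; exact this
    · have hanti : AntitoneOn h (Set.Ioc 0 1) := by
        apply antitoneOn_of_deriv_nonpos (convex_Ioc 0 1)
        · exact hcont.mono (fun x hx => by simp at hx ⊢; exact hx.1)
        · intro x hx
          rw [interior_Ioc] at hx
          exact (hderiv hx.1).differentiableAt.differentiableWithinAt
        · intro x hx
          rw [interior_Ioc] at hx
          rw [(hderiv hx.1).deriv]
          have hk : (x+1) * Real.log x - 2*(x-1) ≤ (1+1) * Real.log 1 - 2*(1-1) :=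
            k_mono (Set.mem_Ioi.mpr hx.1) (Set.mem_Ioi.mpr one_pos) hx.2.le
          rw [Real.log_one] at hk
          nlinarith
      have := hanti (Set.mem_Ioc.mpr ⟨ht, hle⟩) (Set.mem_Ioc.mpr ⟨one_pos, le_refl 1⟩) hle
      rw [h1] at this; exact this
  simpa [hh] using key

/-- pointwise inequality in (x, u) form. -/
private lemma key_xu {x u : ℝ} (hx : 0 ≤ x) (hu : 0 < u) :
    3*(x-u)^2 ≤ 2*(x+2*u)*(x*(Real.log x - Real.log u) - x + u) := by
  rcases eq_or_lt_of_le hx with h0 | hx0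
  · rw [← h0]; ring_nf; nlinarith [hu]
  · set t := x/u with htdef
    have hxt : x = u*t := by rw [htdef]; field_simp
    have hlog : Real.log x - Real.log u = Real.log t := by
      rw [htdef, Real.log_div hx0.ne' hu.ne']
    have ht0 : 0 < t := div_pos hx0 hu
    have hk := key_pointwise ht0
    have := mul_le_mul_of_nonneg_left hk (sq_nonneg u)
    rw [hlog, hxt]
    nlinarith [this]


/-- **Upper bound on the trace distance to the maximally mixed state.**
For a density matrix `ρ` on `ℂ^(2^nA)` with eigenvalues `λ i`, the trace distance
`(1/2) ∑ i, |λ i - 1/2^nA|` is bounded above by `√((nA - S(ρ))/2)`, where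
`S(ρ) = -∑ i, λ i * log₂ (λ i)` is the von Neumann entropy in bits. -/
theorem trace_distance_le_sqrt_entropy_deficit
    (nA : ℕ) (hnA : 1 ≤ nA)
    (ρ : Matrix (Fin (2 ^ nA)) (Fin (2 ^ nA)) ℂ)
    (hρ : ρ.PosSemidef) (htr : ρ.trace = 1) :
    (1 / 2) * ∑ i, |hρ.isHermitian.eigenvalues i - 1 / (2 ^ nA : ℝ)| ≤
      Real.sqrt (((nA : ℝ) -
        (- ∑ i, hρ.isHermitian.eigenvalues i * Real.logb 2 (hρ.isHermitian.eigenvalues i))) / 2) := by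
  classical
  set e : Fin (2 ^ nA) → ℝ := hρ.isHermitian.eigenvalues with he
  have he0 : ∀ i, 0 ≤ e i := fun i => hρ.eigenvalues_nonneg i
  set u : ℝ := 1 / (2 ^ nA : ℝ) with hudef
  have hu : 0 < u := by positivity
  -- sum of eigenvalues is 1
  have htrc : ρ.trace = ∑ i, (e i : ℂ) := by
    conv_lhs => rw [hρ.isHermitian.spectral_theorem]
    rw [Unitary.conjStarAlgAut_apply, Matrix.trace_mul_cycle, Unitary.coe_star_mul_self, Matrix.one_mul,
      Matrix.trace_diagonal]
    rfl
  have hsum : ∑ i, e i = 1 := by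
    have : ((∑ i, e i : ℝ) : ℂ) = ((1:ℝ) : ℂ) := by
      push_cast
      rw [← htrc, htr]
    exact_mod_cast this
  have hsumu : ∑ _i : Fin (2 ^ nA), u = 1 := by
    rw [Finset.sum_const, Finset.card_univ, Fintype.card_fin, nsmul_eq_mul, hudef]
    field_simp
    norm_num
  -- Step A: pointwise bound summed
  have hsA : ∑ i, (e i - u)^2 / (e i + 2*u) ≤
      (2/3) * ∑ i, e i * (Real.log (e i) - Real.log u) := by
    have hterm : ∀ i ∈ Finset.univ, (e i - u)^2 / (e i + 2*u) ≤
        (2/3) * (e i * (Real.log (e i) - Real.log u) - e i + u) := by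
      intro i _
      have hp := key_xu (he0 i) hu
      rw [div_le_iff₀ (by have := he0 i; linarith : (0:ℝ) < e i + 2*u)]
      nlinarith [hp]
    calc ∑ i, (e i - u)^2 / (e i + 2*u)
        ≤ ∑ i, (2/3) * (e i * (Real.log (e i) - Real.log u) - e i + u) :=
          Finset.sum_le_sum hterm
      _ = (2/3) * ∑ i, e i * (Real.log (e i) - Real.log u) := by
          rw [← Finset.mul_sum]
          congr 1
          rw [Finset.sum_add_distrib, Finset.sum_sub_distrib, hsum, hsumu]
          ring
  -- Step B: Cauchy-Schwarz (Sedrakyan)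
  have hsB : (∑ i, |e i - u|)^2 / 3 ≤ ∑ i, (e i - u)^2 / (e i + 2*u) := by
    have h3 : ∑ i : Fin (2 ^ nA), (e i + 2*u) = 3 := by
      rw [Finset.sum_add_distrib, hsum, ← Finset.mul_sum, hsumu]
      ring
    have := Finset.sq_sum_div_le_sum_sq_div Finset.univ (fun i => |e i - u|)
      (g := fun i => e i + 2*u) (fun i _ => by show (0:ℝ) < e i + 2*u; have := he0 i; linarith)
    rw [h3] at this
    simpa [sq_abs] using this
  -- D ≥ 0
  have hD0 : 0 ≤ ∑ i, e i * (Real.log (e i) - Real.log u) := by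
    have h1 : (0:ℝ) ≤ ∑ i, (e i - u)^2 / (e i + 2*u) :=
      Finset.sum_nonneg (fun i _ => div_nonneg (sq_nonneg _) (by have := he0 i; linarith))
    linarith [hsA]
  -- Step C: convert nats to bits
  have hsC : ∑ i, e i * (Real.log (e i) - Real.log u) =
      Real.log 2 * ((nA : ℝ) - (- ∑ i, e i * Real.logb 2 (e i))) := by
    have hlogu : Real.log u = -(nA * Real.log 2) := by
      rw [hudef, one_div, Real.log_inv, Real.log_pow]
    have hterm : ∀ i, e i * (Real.log (e i) - Real.log u) =
        Real.log 2 * (e i * Real.logb 2 (e i) + (nA : ℝ) * e i) := by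
      intro i
      rcases eq_or_lt_of_le (he0 i) with h0 | h0
      · rw [← h0]; ring
      · have hlogb : Real.log 2 * Real.logb 2 (e i) = Real.log (e i) := by
          rw [Real.logb, mul_div_cancel₀ _ (Real.log_ne_zero_of_pos_of_ne_one two_pos (by norm_num))]
        rw [hlogu]
        nlinarith [hlogb]
    rw [Finset.sum_congr rfl (fun i _ => hterm i), ← Finset.mul_sum]
    congr 1
    rw [Finset.sum_add_distrib, ← Finset.mul_sum, hsum]
    ring
  -- combine
  set S : ℝ := - ∑ i, e i * Real.logb 2 (e i) with hS
  set L : ℝ := ∑ i, |e i - u| with hL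
  have hlog2a : (0:ℝ) < Real.log 2 := Real.log_pos (by norm_num)
  have hlog2b : Real.log 2 < 1 := by
    have := Real.log_two_lt_d9
    linarith
  have hnAS : 0 ≤ (nA : ℝ) - S := by
    rw [hsC] at hD0
    exact nonneg_of_mul_nonneg_right hD0 hlog2a
  have hkey : ((1/2) * L)^2 ≤ ((nA : ℝ) - S)/2 := by
    have h1 : L^2 ≤ 2 * (Real.log 2 * ((nA : ℝ) - S)) := by
      rw [← hsC]
      nlinarith [hsA, hsB]
    nlinarith [h1, hnAS, hlog2a, hlog2b]
  calc (1/2) * L = Real.sqrt (((1/2) * L)^2) := by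
        rw [Real.sqrt_sq (by positivity)]
    _ ≤ Real.sqrt (((nA : ℝ) - S)/2) := Real.sqrt_le_sqrt hkey
end

section
/- Let n_A ≥ 1, d = 2^{n_A}, let k ≥ 1 be a real number, and let ρ be a density matrix on ℂ^d with eigenvalues λ_1, …, λ_d. Then (1/(2k))·(∑_{i=1}^d λ_i^k − d^{1−k}) ≤ (1/2)·∑_{i=1}^d |λ_i − 1/d|. Equivalently, writing the Renyi-k entropy in bits as R_k(ρ) = (1/(1−k))·log₂(∑_i λ_i^k) for k ≠ 1, the trace distance between ρ and the maximally mixed state is bounded below by (1/(2k))·(2^{(1−k)R_k(ρ)} − 2^{(1−k)n_A}). -/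
open Real Finset
open scoped ComplexOrder

/-- Sum of eigenvalues of a Hermitian matrix equals the trace (complex case). -/
lemma sum_eigenvalues_eq_trace' {n : ℕ} {A : Matrix (Fin n) (Fin n) ℂ}
    (hA : A.IsHermitian) : ((∑ i, hA.eigenvalues i : ℝ) : ℂ) = A.trace := by
  have h := hA.spectral_theorem
  calc ((∑ i, hA.eigenvalues i : ℝ) : ℂ)
      = (Matrix.diagonal (RCLike.ofReal ∘ hA.eigenvalues) :
          Matrix (Fin n) (Fin n) ℂ).trace := by
        simp [Matrix.trace, Matrix.diag, Matrix.diagonal]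
    _ = A.trace := by
        conv_rhs => rw [h, Unitary.conjStarAlgAut_apply]
        rw [Matrix.trace_mul_cycle,
          (Matrix.mem_unitaryGroup_iff').mp (hA.eigenvectorUnitary).2, Matrix.one_mul]

/-- Lipschitz-type bound for `rpow` on `[0,1]`. -/
lemma rpow_sub_rpow_le {a b k : ℝ} (ha : 0 ≤ a) (ha1 : a ≤ 1) (hb : 0 ≤ b) (hb1 : b ≤ 1)
    (hk : 1 ≤ k) : a ^ k - b ^ k ≤ k * |a - b| := by
  rcases le_total b a with hle | hle
  · have key := norm_image_sub_le_of_norm_deriv_le_segment'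
      (f := fun x : ℝ => x ^ k) (f' := fun x : ℝ => k * x ^ (k - 1)) (a := b) (b := a) (C := k)
      (fun x hx => (Real.hasDerivAt_rpow_const (Or.inr hk)).hasDerivWithinAt)
      (fun x hx => by
        have hx0 : 0 ≤ x := le_trans hb hx.1
        have hx1 : x ≤ 1 := le_trans (le_of_lt hx.2) ha1
        have : x ^ (k - 1) ≤ 1 := Real.rpow_le_one hx0 hx1 (by linarith)
        have hxk : 0 ≤ x ^ (k - 1) := Real.rpow_nonneg hx0 _
        rw [Real.norm_eq_abs, abs_mul, abs_of_nonneg (by linarith : (0:ℝ) ≤ k),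
          abs_of_nonneg hxk]
        nlinarith) a (Set.right_mem_Icc.mpr hle)
    rw [Real.norm_eq_abs] at key
    calc a ^ k - b ^ k ≤ |a ^ k - b ^ k| := le_abs_self _
      _ ≤ k * (a - b) := key
      _ = k * |a - b| := by rw [abs_of_nonneg (by linarith)]
  · have h1 : a ^ k ≤ b ^ k := Real.rpow_le_rpow ha hle (by linarith)
    have h2 : 0 ≤ |a - b| := abs_nonneg _
    nlinarith

/-- **Lower bound on the trace distance to the maximally mixed state via Renyi/Tsallis entropies.**
For a density matrix `ρ` on `ℂ^(2^nA)` with eigenvalues `λ i` and a real `k ≥ 1`,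
`(1/(2k)) * (∑ i, (λ i)^k - (2^nA)^(1-k)) ≤ (1/2) * ∑ i, |λ i - 1/2^nA|`.
In terms of the Renyi-`k` entropy `R_k = (1/(1-k)) * log₂ (∑ i, (λ i)^k)`, the left-hand
side equals `(1/(2k)) * (2^((1-k)*R_k) - 2^((1-k)*nA))`. -/
theorem tsallis_lower_bound_trace_distance
    (nA : ℕ) (hnA : 1 ≤ nA) (k : ℝ) (hk : 1 ≤ k)
    (ρ : Matrix (Fin (2 ^ nA)) (Fin (2 ^ nA)) ℂ)
    (hρ : ρ.PosSemidef) (htr : ρ.trace = 1) :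
    (1 / (2 * k)) * ((∑ i, hρ.isHermitian.eigenvalues i ^ k) - (2 ^ nA : ℝ) ^ ((1 : ℝ) - k)) ≤
      (1 / 2) * ∑ i, |hρ.isHermitian.eigenvalues i - 1 / (2 ^ nA : ℝ)| := by
  have hcast : ((2 ^ nA : ℕ) : ℝ) = (2 ^ nA : ℝ) := by push_cast; ring
  set lam : Fin (2 ^ nA) → ℝ := hρ.isHermitian.eigenvalues with hlam
  have hsum : ∑ i, lam i = 1 := by
    have := sum_eigenvalues_eq_trace' hρ.isHermitian
    rw [htr] at this
    exact_mod_cast this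
  have hnonneg : ∀ i, 0 ≤ lam i := fun i => hρ.eigenvalues_nonneg i
  have hle1 : ∀ i, lam i ≤ 1 := by
    intro i
    rw [← hsum]
    exact Finset.single_le_sum (fun j _ => hnonneg j) (Finset.mem_univ i)
  have hdpos : (0 : ℝ) < (2 ^ nA : ℝ) := by positivity
  have hd1 : 1 / (2 ^ nA : ℝ) ≤ 1 := by
    rw [div_le_one hdpos]
    exact one_le_pow₀ one_le_two
  have hd0 : (0 : ℝ) ≤ 1 / (2 ^ nA : ℝ) := by positivity
  -- rewrite d^(1-k) as sum of (1/d)^k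
  have hrw : ((2 ^ nA : ℝ)) ^ ((1 : ℝ) - k) = ∑ _i : Fin (2 ^ nA), (1 / (2 ^ nA : ℝ)) ^ k := by
    rw [Finset.sum_const, Finset.card_univ, Fintype.card_fin, nsmul_eq_mul, hcast,
      Real.rpow_sub hdpos, Real.rpow_one, Real.div_rpow (by norm_num) hdpos.le,
      Real.one_rpow]
    field_simp
  have key : (∑ i, lam i ^ k) - (2 ^ nA : ℝ) ^ ((1 : ℝ) - k) ≤ k * ∑ i, |lam i - 1 / (2 ^ nA : ℝ)| := by
    rw [hrw, ← Finset.sum_sub_distrib, Finset.mul_sum]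
    apply Finset.sum_le_sum
    intro i _
    exact rpow_sub_rpow_le (hnonneg i) (hle1 i) hd0 hd1 hk
  have hkpos : (0 : ℝ) < k := by linarith
  have h2k : (0 : ℝ) < 2 * k := by linarith
  rw [div_mul_eq_mul_div, div_mul_eq_mul_div, one_mul, one_mul, div_le_div_iff₀ h2k (by norm_num)]
  calc ((∑ i, lam i ^ k) - (2 ^ nA : ℝ) ^ ((1 : ℝ) - k)) * 2
      ≤ (k * ∑ i, |lam i - 1 / (2 ^ nA : ℝ)|) * 2 := by linarith
    _ = (∑ i, |lam i - 1 / (2 ^ nA : ℝ)|) * (2 * k) := by ring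
end

section
/- Let n_A ≥ 1, d = 2^{n_A}, and let ρ be a density matrix on ℂ^d with eigenvalues λ_1, …, λ_d and von Neumann entropy S(ρ) = −∑_i λ_i log₂ λ_i. Then 1 − S(ρ)/n_A ≤ (1/2)·∑_{i=1}^d |λ_i − 1/d| + 1/n_A. (This is the precise, non-asymptotic form of the asymptotic lower bound 1 − S(ρ)/n_A ≲ (1/2)‖ρ − (1/d)I‖₁ as n_A → ∞.) -/
open Real Finset
open scoped ComplexOrder

private lemma logb_two_le_self {x : ℝ} (hx : 1 ≤ x) : Real.logb 2 x ≤ x := by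
  have hx0 : (0:ℝ) < x := by linarith
  have hs : Real.log (√x) ≤ √x - 1 := Real.log_le_sub_one_of_pos (Real.sqrt_pos.mpr hx0)
  rw [Real.log_sqrt hx0.le] at hs
  have hl2 : (0.6931471803 : ℝ) < Real.log 2 := Real.log_two_gt_d9
  have hsq : √x ^ 2 = x := Real.sq_sqrt hx0.le
  have hsn : (0:ℝ) ≤ √x := Real.sqrt_nonneg x
  rw [Real.logb, div_le_iff₀ (by linarith)]
  nlinarith [sq_nonneg (√x - 2)]

-- per-eigenvalue bound
private lemma key_bound {n : ℕ} {l : ℝ} (hl0 : 0 ≤ l) (hl1 : l ≤ 1) :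
    l * ((n : ℝ) + Real.logb 2 l) ≤ (n : ℝ) * max (l - 1 / (2 ^ n : ℝ)) 0 + l := by
  set d : ℝ := (2 ^ n : ℝ) with hd
  have hd0 : (0:ℝ) < d := by positivity
  rcases eq_or_lt_of_le hl0 with h0 | hl0'
  · simp [← h0]
    positivity
  have hlogd : Real.logb 2 d = (n : ℝ) := by
    rw [hd, Real.logb_pow, Real.logb_self_eq_one (by norm_num)]
    ring
  have hmul : Real.logb 2 (d * l) = (n : ℝ) + Real.logb 2 l := by
    rw [Real.logb_mul (ne_of_gt hd0) (ne_of_gt hl0'), hlogd]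
  rw [← hmul]
  rcases le_or_gt l (1 / d) with hc | hc
  · -- d*l ≤ 1, so logb ≤ 0, LHS ≤ 0 ≤ RHS
    have h1 : Real.logb 2 (d * l) ≤ 0 := by
      apply Real.logb_nonpos (by norm_num) (by positivity)
      have hdi : d * (1/d) = 1 := by field_simp
      nlinarith
    have : l * Real.logb 2 (d * l) ≤ 0 := mul_nonpos_of_nonneg_of_nonpos hl0 h1
    have hmax : (0:ℝ) ≤ max (l - 1/d) 0 := le_max_right _ _
    nlinarith
  · -- l > 1/d
    have hdl1 : 1 ≤ d * l := by
      rw [div_lt_iff₀ hd0] at hc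
      linarith [hc]
    have hub : Real.logb 2 (d * l) ≤ (n : ℝ) := by
      rw [← hlogd]
      apply Real.logb_le_logb_of_le (by norm_num : (1:ℝ) < 2) (by linarith)
      nlinarith
    have hlog0 : 0 ≤ Real.logb 2 (d * l) := Real.logb_nonneg (by norm_num) hdl1
    have hself : Real.logb 2 (d * l) ≤ d * l := logb_two_le_self hdl1
    have hmax : max (l - 1/d) 0 = l - 1/d := max_eq_left (by linarith)
    rw [hmax]
    have split : l * Real.logb 2 (d * l) =
        (l - 1/d) * Real.logb 2 (d * l) + (1/d) * Real.logb 2 (d * l) := by ring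
    have h1 : (l - 1/d) * Real.logb 2 (d * l) ≤ (l - 1/d) * (n : ℝ) :=
      mul_le_mul_of_nonneg_left hub (by linarith)
    have h2 : (1/d) * Real.logb 2 (d * l) ≤ (1/d) * (d * l) :=
      mul_le_mul_of_nonneg_left hself (by positivity)
    have h3 : (1/d) * (d * l) = l := by field_simp
    nlinarith

/-- **Non-asymptotic form of the asymptotic lower bound from the Fannes–Audenaert inequality.**
For a density matrix `ρ` on `ℂ^(2^nA)` with eigenvalues `λ i` and von Neumann entropy
`S(ρ) = -∑ i, λ i * log₂ (λ i)` in bits,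
`1 - S(ρ)/nA ≤ (1/2) * ∑ i, |λ i - 1/2^nA| + 1/nA`. -/
theorem entropy_deficit_le_trace_distance_add
    (nA : ℕ) (hnA : 1 ≤ nA)
    (ρ : Matrix (Fin (2 ^ nA)) (Fin (2 ^ nA)) ℂ)
    (hρ : ρ.PosSemidef) (htr : ρ.trace = 1) :
    1 - (- ∑ i, hρ.isHermitian.eigenvalues i * Real.logb 2 (hρ.isHermitian.eigenvalues i)) / (nA : ℝ) ≤
      (1 / 2) * ∑ i, |hρ.isHermitian.eigenvalues i - 1 / (2 ^ nA : ℝ)| + 1 / (nA : ℝ) := by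
  set lam := hρ.isHermitian.eigenvalues with hlam
  set d : ℝ := (2 ^ nA : ℝ) with hd
  have hd0 : (0:ℝ) < d := by positivity
  -- sum of eigenvalues = 1
  have htrace : ρ.trace = ∑ i, (lam i : ℂ) := by
    exact hρ.isHermitian.trace_eq_sum_eigenvalues
  have hsum : ∑ i, lam i = 1 := by
    have : ((∑ i, lam i : ℝ) : ℂ) = 1 := by
      rw [← htr, htrace]; push_cast; rfl
    exact_mod_cast this
  have hnn : ∀ i, 0 ≤ lam i := fun i => hρ.eigenvalues_nonneg i
  have hle1 : ∀ i, lam i ≤ 1 := by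
    intro i
    rw [← hsum]
    exact Finset.single_le_sum (fun j _ => hnn j) (Finset.mem_univ i)
  -- positive part sum equals half the abs sum
  have hzero : ∑ i, (lam i - 1/d) = 0 := by
    rw [Finset.sum_sub_distrib, hsum, Finset.sum_const]
    simp [hd]
  have hhalf : ∑ i, max (lam i - 1/d) 0 = (1/2) * ∑ i, |lam i - 1/d| := by
    have hpt : ∀ x : ℝ, max x 0 = (x + |x|)/2 := by
      intro x
      rcases le_or_gt 0 x with h | h
      · rw [max_eq_left h, abs_of_nonneg h]; ring
      · rw [max_eq_right h.le, abs_of_neg h]; ring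
    rw [Finset.sum_congr rfl (fun i _ => hpt (lam i - 1/d)), ← Finset.sum_div,
      Finset.sum_add_distrib, hzero]
    ring
  -- main sum bound
  have hmain : ∑ i, lam i * ((nA : ℝ) + Real.logb 2 (lam i)) ≤
      (nA : ℝ) * ∑ i, max (lam i - 1/d) 0 + 1 := by
    calc ∑ i, lam i * ((nA : ℝ) + Real.logb 2 (lam i))
        ≤ ∑ i, ((nA : ℝ) * max (lam i - 1/d) 0 + lam i) :=
          Finset.sum_le_sum (fun i _ => key_bound (hnn i) (hle1 i))
      _ = (nA : ℝ) * ∑ i, max (lam i - 1/d) 0 + 1 := by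
          rw [Finset.sum_add_distrib, Finset.mul_sum, hsum]
  have hexp : ∑ i, lam i * ((nA : ℝ) + Real.logb 2 (lam i)) =
      (nA : ℝ) - (- ∑ i, lam i * Real.logb 2 (lam i)) := by
    have : ∑ i, lam i * ((nA : ℝ) + Real.logb 2 (lam i)) =
        (∑ i, lam i) * (nA : ℝ) + ∑ i, lam i * Real.logb 2 (lam i) := by
      rw [Finset.sum_mul, ← Finset.sum_add_distrib]
      exact Finset.sum_congr rfl (fun i _ => by ring)
    rw [this, hsum]
    ring
  have hn0 : (0:ℝ) < (nA : ℝ) := by exact_mod_cast hnA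
  set S := - ∑ i, lam i * Real.logb 2 (lam i) with hS
  rw [show (1:ℝ) - S / (nA:ℝ) = ((nA:ℝ) - S) / (nA:ℝ) by field_simp, div_le_iff₀ hn0]
  have hfin : (nA:ℝ) - S ≤ (nA : ℝ) * ((1/2) * ∑ i, |lam i - 1/d|) + 1 := by
    rw [← hhalf]
    rw [hS, ← hexp]
    exact hmain
  have : ((1/2) * ∑ i, |lam i - 1/d| + 1/(nA:ℝ)) * (nA:ℝ)
      = (nA : ℝ) * ((1/2) * ∑ i, |lam i - 1/d|) + 1 := by rw [add_mul, one_div_mul_cancel hn0.ne']; ring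
  rw [this]
  exact hfin
end

section
/- Let d ≥ 1, let k ≥ 1 be a real number, and let p be a probability vector on d outcomes. Then (1/(2k))·(∑_{i=1}^d p_i^k − d^{1−k}) ≤ (1/2)·∑_{i=1}^d |p_i − 1/d|. -/
open Real Finset

lemma key_rpow_diff (k : ℝ) (hk : 1 ≤ k) (x y : ℝ) (hy : 0 ≤ y) (hxy : y ≤ x)
    (hx1 : x ≤ 1) : x ^ k - y ^ k ≤ k * (x - y) := by
  rcases eq_or_lt_of_le (hy.trans hxy) with h0 | hx0
  · have hx : x = 0 := h0.symm
    have hy0 : y = 0 := le_antisymm (hxy.trans_eq hx) hy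
    simp [hx, hy0, Real.zero_rpow (by linarith : k ≠ 0)]
  · -- Bernoulli with s = y/x - 1
    have hs : (-1 : ℝ) ≤ y / x - 1 := by
      have : 0 ≤ y / x := div_nonneg hy hx0.le
      linarith
    have hb := one_add_mul_self_le_rpow_one_add hs hk
    have h1s : 1 + (y / x - 1) = y / x := by ring
    rw [h1s] at hb
    have hdiv : (y / x) ^ k = y ^ k / x ^ k :=
      Real.div_rpow hy hx0.le k
    rw [hdiv] at hb
    have hxk : 0 < x ^ k := Real.rpow_pos_of_pos hx0 k
    have hmul : (1 + k * (y / x - 1)) * x ^ k ≤ y ^ k := by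
      calc (1 + k * (y / x - 1)) * x ^ k ≤ y ^ k / x ^ k * x ^ k :=
            mul_le_mul_of_nonneg_right hb hxk.le
        _ = y ^ k := div_mul_cancel₀ _ hxk.ne'
    -- x^k - y^k ≤ k * x^(k-1) * (x - y)
    have hxk1 : x ^ (k - 1) ≤ 1 := Real.rpow_le_one hx0.le hx1 (by linarith)
    have hxsplit : x ^ k = x ^ (k - 1) * x := by
      rw [← Real.rpow_add_one hx0.ne' (k - 1)]; ring_nf
    have hxyx : k * (y / x - 1) * x ^ k = k * x ^ (k - 1) * (y - x) := by
      rw [hxsplit]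
      field_simp
    have h2 : x ^ k - y ^ k ≤ k * x ^ (k - 1) * (x - y) := by
      nlinarith [hmul, hxyx]
    have h3 : k * x ^ (k - 1) * (x - y) ≤ k * (x - y) := by
      have h4 : 0 ≤ k * (x - y) := by nlinarith
      nlinarith [mul_le_mul_of_nonneg_left hxk1 h4]
    linarith

/-- **Tsallis lower bound for the distance to the uniform distribution.**
For a probability vector `p` on `d ≥ 1` outcomes and a real `k ≥ 1`,
`(1/(2k)) * (∑ i, (p i)^k - d^(1-k)) ≤ (1/2) * ∑ i, |p i - 1/d|`. -/
theorem tsallis_lower_bound_prob_distance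
    (d : ℕ) (hd : 1 ≤ d) (k : ℝ) (hk : 1 ≤ k) (p : Fin d → ℝ)
    (hp : ∀ i, 0 ≤ p i) (hsum : ∑ i, p i = 1) :
    (1 / (2 * k)) * ((∑ i, p i ^ k) - (d : ℝ) ^ ((1 : ℝ) - k)) ≤
      (1 / 2) * ∑ i, |p i - 1 / (d : ℝ)| := by
  have hd0 : (0 : ℝ) < d := by exact_mod_cast hd
  have hu0 : (0 : ℝ) ≤ 1 / d := by positivity
  have hu1 : (1 : ℝ) / d ≤ 1 := by
    rw [div_le_one hd0]; exact_mod_cast hd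
  have hp1 : ∀ i, p i ≤ 1 := by
    intro i
    rw [← hsum]
    exact Finset.single_le_sum (fun j _ => hp j) (mem_univ i)
  -- d^(1-k) = ∑ (1/d)^k
  have hdpow : (d : ℝ) ^ ((1 : ℝ) - k) = ∑ _i : Fin d, (1 / (d : ℝ)) ^ k := by
    rw [Finset.sum_const, card_univ, Fintype.card_fin, nsmul_eq_mul]
    rw [one_div, ← Real.rpow_neg_one, ← Real.rpow_mul hd0.le]
    rw [show ((d:ℝ)) * (d:ℝ) ^ (-1 * k) = (d:ℝ) ^ (1:ℝ) * (d:ℝ) ^ (-1 * k) by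
      rw [Real.rpow_one], ← Real.rpow_add hd0]
    ring_nf
  have hterm : ∀ i, p i ^ k - (1 / (d : ℝ)) ^ k ≤ k * |p i - 1 / d| := by
    intro i
    rcases le_or_gt (1 / (d : ℝ)) (p i) with h | h
    · have := key_rpow_diff k hk (p i) (1 / d) hu0 h (hp1 i)
      rw [abs_of_nonneg (by linarith)]
      linarith
    · have hle : p i ^ k ≤ (1 / (d : ℝ)) ^ k :=
        Real.rpow_le_rpow (hp i) h.le (by linarith)
      have : 0 ≤ k * |p i - 1 / d| := by positivity
      linarith
  have hsum' : (∑ i, p i ^ k) - (d : ℝ) ^ ((1 : ℝ) - k) ≤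
      k * ∑ i, |p i - 1 / (d : ℝ)| := by
    rw [hdpow, ← Finset.sum_sub_distrib, Finset.mul_sum]
    exact Finset.sum_le_sum fun i _ => hterm i
  have hk0 : (0 : ℝ) < k := by linarith
  rw [div_mul_eq_mul_div, one_mul, div_le_iff₀ (by positivity)]
  calc (∑ i, p i ^ k) - (d : ℝ) ^ ((1 : ℝ) - k)
      ≤ k * ∑ i, |p i - 1 / (d : ℝ)| := hsum'
    _ = 1 / 2 * (∑ i, |p i - 1 / (d : ℝ)|) * (2 * k) := by ring
end

section
/- Let d ≥ 2 and let p and q be probability vectors on d outcomes. Set T = (1/2)·∑_{i=1}^d |p_i − q_i|. Then the Fannes–Audenaert inequality holds: |H(p) − H(q)| ≤ T·log₂(d − 1) + H_b(T), where H_b(t) = −t log₂ t − (1 − t) log₂(1 − t) is the binary entropy function (with H_b(0) = H_b(1) = 0). -/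
open Real Finset


lemma gibbs_term {w v : ℝ} (hw : 0 ≤ w) (hv : 0 ≤ v) (h : w ≠ 0 → 0 < v) :
    w * Real.log v - w * Real.log w ≤ v - w := by
  rcases eq_or_lt_of_le hw with h0 | h0
  · simp [← h0, hv]
  · have hv' : 0 < v := h (ne_of_gt h0)
    have hlog : Real.log v - Real.log w = Real.log (v / w) := (Real.log_div hv'.ne' h0.ne').symm
    have h2 : Real.log (v / w) ≤ v / w - 1 := Real.log_le_sub_one_of_pos (by positivity)
    calc w * Real.log v - w * Real.log w = w * Real.log (v / w) := by rw [← hlog]; ring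
      _ ≤ w * (v / w - 1) := by nlinarith
      _ = v - w := by field_simp

lemma mono_term {w p : ℝ} (hw : 0 ≤ w) (hwp : w ≤ p) :
    w * Real.log w ≤ w * Real.log p := by
  rcases eq_or_lt_of_le hw with h0 | h0
  · simp [← h0]
  · exact mul_le_mul_of_nonneg_left (Real.log_le_log h0 hwp) h0.le

lemma key (d : ℕ) (hd : 2 ≤ d) (p q : Fin d → ℝ)
    (hp : ∀ i, 0 ≤ p i) (hpsum : ∑ i, p i = 1)
    (hq : ∀ i, 0 ≤ q i) (hqsum : ∑ i, q i = 1) :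
    (- ∑ i, p i * Real.log (p i)) - (- ∑ i, q i * Real.log (q i)) ≤
      ((1 / 2) * ∑ i, |p i - q i|) * Real.log ((d : ℝ) - 1) +
        (-(((1 / 2) * ∑ i, |p i - q i|)) * Real.log ((1 / 2) * ∑ i, |p i - q i|)
          - (1 - (1 / 2) * ∑ i, |p i - q i|) *
              Real.log (1 - (1 / 2) * ∑ i, |p i - q i|)) := by
  obtain ⟨m, hm⟩ : ∃ m : Fin d → ℝ, m = fun i => min (p i) (q i) := ⟨_, rfl⟩
  obtain ⟨a, ha⟩ : ∃ a : Fin d → ℝ, a = fun i => p i - m i := ⟨_, rfl⟩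
  obtain ⟨b, hb⟩ : ∃ b : Fin d → ℝ, b = fun i => q i - m i := ⟨_, rfl⟩
  have ha0 : ∀ i, 0 ≤ a i := fun i => by simp [ha, hm, min_le_left]
  have hb0 : ∀ i, 0 ≤ b i := fun i => by simp [hb, hm, min_le_right]
  have hab0 : ∀ i, a i * b i = 0 := by
    intro i
    rcases le_total (p i) (q i) with h | h
    · have hh : m i = p i := by rw [hm]; exact min_eq_left h
      simp [ha, hb, hh]
    · have hh : m i = q i := by rw [hm]; exact min_eq_right h
      simp [ha, hb, hh]
  have habs : ∀ i, |p i - q i| = a i + b i := by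
    intro i
    rcases le_total (p i) (q i) with h | h
    · have hmi : m i = p i := by rw [hm]; exact min_eq_left h
      rw [abs_of_nonpos (by linarith)]; simp [ha, hb, hmi]
    · have hmi : m i = q i := by rw [hm]; exact min_eq_right h
      rw [abs_of_nonneg (by linarith)]; simp [ha, hb, hmi]
  obtain ⟨T, hT⟩ : ∃ T : ℝ, T = (1 / 2) * ∑ i, |p i - q i| := ⟨_, rfl⟩
  rw [← hT]
  have hTa : T = ∑ i, a i := by
    have h1 : ∑ i, |p i - q i| = (∑ i, a i) + (∑ i, b i) := by
      rw [← Finset.sum_add_distrib]; exact Finset.sum_congr rfl fun i _ => habs i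
    have h2 : (∑ i, a i) = 1 - ∑ i, m i := by
      simp [ha, Finset.sum_sub_distrib, hpsum]
    have h3 : (∑ i, b i) = 1 - ∑ i, m i := by
      simp [hb, Finset.sum_sub_distrib, hqsum]
    rw [hT, h1, h2, h3]; ring
  have hTb : T = ∑ i, b i := by
    rw [hTa]
    simp [ha, hb, Finset.sum_sub_distrib, hpsum, hqsum]
  have hmsum : ∑ i, m i = 1 - T := by
    rw [hTa]; simp [ha, Finset.sum_sub_distrib, hpsum]
  have hT0 : 0 ≤ T := by
    rw [hTa]; exact Finset.sum_nonneg fun i _ => ha0 i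
  have hm0 : ∀ i, 0 ≤ m i := fun i => by rw [hm]; exact le_min (hp i) (hq i)
  have hT1 : T ≤ 1 := by
    have : 0 ≤ ∑ i, m i := Finset.sum_nonneg fun i _ => hm0 i
    linarith [hmsum]
  rcases eq_or_lt_of_le hT0 with hTz | hTpos
  · -- T = 0 case: p = q
    have hpq : p = q := by
      have hsum0 : ∑ i, |p i - q i| = 0 := by
        have : T = 0 := hTz.symm
        rw [hT] at this; linarith
      funext i
      have := (Finset.sum_eq_zero_iff_of_nonneg (fun i _ => abs_nonneg _)).mp hsum0 i (Finset.mem_univ i)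
      have := abs_eq_zero.mp this
      linarith
    subst hpq
    have : T = 0 := hTz.symm
    rw [this]
    simp
  · -- main case T > 0
    have hd1 : (1:ℝ) ≤ (d:ℝ) - 1 := by
      have : (2:ℝ) ≤ (d:ℝ) := by exact_mod_cast hd
      linarith
    have hd1' : (0:ℝ) < (d:ℝ) - 1 := by linarith
    obtain ⟨w, hw⟩ : ∃ w : Fin d → Fin d → ℝ,
        w = fun i j => (if i = j then m i else 0) + a i * b j / T := ⟨_, rfl⟩
    have hw0 : ∀ i j, 0 ≤ w i j := by
      intro i j
      have h1 : 0 ≤ a i * b j / T := div_nonneg (mul_nonneg (ha0 i) (hb0 j)) hT0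
      rcases eq_or_ne i j with h | h
      · subst h; simpa [hw] using add_nonneg (hm0 i) h1
      · simpa [hw, h] using h1
    have hrow : ∀ i, ∑ j, w i j = p i := by
      intro i
      simp only [hw]
      rw [Finset.sum_add_distrib, Finset.sum_ite_eq]
      have : ∑ j, a i * b j / T = a i := by
        rw [← Finset.sum_div, ← Finset.mul_sum, ← hTb]
        field_simp
      rw [this]
      simp [ha]
    have hcol : ∀ j, ∑ i, w i j = q j := by
      intro j
      simp only [hw]
      rw [Finset.sum_add_distrib, Finset.sum_ite_eq']
      have : ∑ i, a i * b j / T = b j := by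
        rw [← Finset.sum_div, ← Finset.sum_mul, ← hTa]
        field_simp
      rw [this]
      simp [hb]
    have htotal : ∑ i, ∑ j, w i j = 1 := by
      rw [Finset.sum_congr rfl fun i _ => hrow i, hpsum]
    have hdiag : ∀ i, w i i = m i := by
      intro i; simp [hw, hab0 i]
    have hdiagsum : ∑ i, w i i = 1 - T := by
      rw [Finset.sum_congr rfl fun i _ => hdiag i, hmsum]
    -- comparison distribution v
    obtain ⟨u, hu⟩ : ∃ u : Fin d → Fin d → ℝ,
        u = fun i j => if i = j then 1 - T else T / ((d:ℝ) - 1) := ⟨_, rfl⟩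
    obtain ⟨v, hv⟩ : ∃ v : Fin d → Fin d → ℝ, v = fun i j => q j * u i j := ⟨_, rfl⟩
    have hu0 : ∀ i j, 0 ≤ u i j := by
      intro i j
      rcases eq_or_ne i j with h | h
      · simp only [hu, h, if_pos rfl]; linarith
      · simp only [hu, if_neg h]; positivity
    have hv0 : ∀ i j, 0 ≤ v i j := fun i j => by
      rw [hv]; exact mul_nonneg (hq j) (hu0 i j)
    have husum : ∀ j, ∑ i, u i j = 1 := by
      intro j
      have : ∀ i, u i j = T / ((d:ℝ) - 1) + (if i = j then (1 - T - T / ((d:ℝ)-1)) else 0) := by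
        intro i; rcases eq_or_ne i j with h | h <;> simp [hu, h]
      rw [Finset.sum_congr rfl fun i _ => this i, Finset.sum_add_distrib,
          Finset.sum_ite_eq', Finset.sum_const]
      simp [Finset.card_univ]
      field_simp
      ring
    have hvsum : ∑ i, ∑ j, v i j = 1 := by
      rw [Finset.sum_comm]
      have : ∀ j, ∑ i, v i j = q j := by
        intro j
        simp only [hv, ← Finset.mul_sum]
        rw [husum j, mul_one]
      rw [Finset.sum_congr rfl fun j _ => this j, hqsum]
    -- positivity transfer: w i j ≠ 0 → 0 < v i j
    have hwv : ∀ i j, w i j ≠ 0 → 0 < v i j := by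
      intro i j hne
      have hwpos : 0 < w i j := lt_of_le_of_ne (hw0 i j) (Ne.symm hne)
      rcases eq_or_ne i j with h | h
      · subst h
        have hmi : 0 < m i := by rw [← hdiag i]; exact hwpos
        have hqi : 0 < q i := lt_of_lt_of_le hmi (by rw [hm]; exact min_le_right _ _)
        have h1T : 0 < 1 - T := by
          have : m i ≤ ∑ k, m k := Finset.single_le_sum (fun k _ => hm0 k) (Finset.mem_univ i)
          rw [hmsum] at this; linarith
        have : v i i = q i * (1 - T) := by simp [hv, hu]
        rw [this]; positivity
      · have hwij : w i j = a i * b j / T := by simp [hw, h]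
        have hbj : 0 < b j := by
          by_contra hc
          push_neg at hc
          have : b j = 0 := le_antisymm hc (hb0 j)
          rw [hwij, this] at hwpos; simp at hwpos
        have hqj : 0 < q j := by
          have : b j ≤ q j := by
            have := hm0 j; simp [hb]; linarith [hm0 j]
          linarith
        have : v i j = q j * (T / ((d:ℝ)-1)) := by simp [hv, hu, h]
        rw [this]; positivity
    -- Gibbs: ∑∑ w log v ≤ ∑∑ w log w
    have hgibbs : ∑ i, ∑ j, w i j * Real.log (v i j) ≤ ∑ i, ∑ j, w i j * Real.log (w i j) := by
      have hterm : ∀ i j, w i j * Real.log (v i j) - w i j * Real.log (w i j) ≤ v i j - w i j :=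
        fun i j => gibbs_term (hw0 i j) (hv0 i j) (hwv i j)
      have hsum : ∑ i, ∑ j, (w i j * Real.log (v i j) - w i j * Real.log (w i j)) ≤
          ∑ i, ∑ j, (v i j - w i j) :=
        Finset.sum_le_sum fun i _ => Finset.sum_le_sum fun j _ => hterm i j
      have h1 : ∑ i, ∑ j, (v i j - w i j) = 0 := by
        simp [Finset.sum_sub_distrib, hvsum, htotal]
      have h2 : ∑ i, ∑ j, (w i j * Real.log (v i j) - w i j * Real.log (w i j)) =
          (∑ i, ∑ j, w i j * Real.log (v i j)) - ∑ i, ∑ j, w i j * Real.log (w i j) := by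
        simp [Finset.sum_sub_distrib]
      linarith [hsum, h1, h2.symm.le]
    -- monotonicity: ∑∑ w log w ≤ ∑ p log p
    have hmono : ∑ i, ∑ j, w i j * Real.log (w i j) ≤ ∑ i, p i * Real.log (p i) := by
      have : ∀ i, ∑ j, w i j * Real.log (w i j) ≤ p i * Real.log (p i) := by
        intro i
        calc ∑ j, w i j * Real.log (w i j) ≤ ∑ j, w i j * Real.log (p i) := by
              apply Finset.sum_le_sum
              intro j _
              apply mono_term (hw0 i j)
              rw [← hrow i]
              exact Finset.single_le_sum (fun k _ => hw0 i k) (Finset.mem_univ j)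
          _ = p i * Real.log (p i) := by rw [← Finset.sum_mul, hrow i]
      exact Finset.sum_le_sum fun i _ => this i
    -- compute ∑∑ w log v
    have hcompute : ∑ i, ∑ j, w i j * Real.log (v i j) =
        (∑ j, q j * Real.log (q j)) + (T * Real.log T - T * Real.log ((d:ℝ)-1)
          + (1 - T) * Real.log (1 - T)) := by
      have hsplit : ∀ i j, w i j * Real.log (v i j)
          = w i j * Real.log (q j) + w i j * Real.log (u i j) := by
        intro i j
        rcases eq_or_ne (w i j) 0 with h | h
        · simp [h]
        · have hv' : 0 < v i j := hwv i j h
          have hqj : q j ≠ 0 := by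
            intro h0
            rw [hv] at hv'; simp only [h0, zero_mul] at hv'; exact lt_irrefl 0 hv'
          have huj : u i j ≠ 0 := by
            intro h0
            rw [hv] at hv'; simp only [h0, mul_zero] at hv'; exact lt_irrefl 0 hv'
          have : v i j = q j * u i j := by rw [hv]
          rw [this, Real.log_mul hqj huj]; ring
      have h1 : ∑ i, ∑ j, w i j * Real.log (v i j)
          = (∑ i, ∑ j, w i j * Real.log (q j)) + ∑ i, ∑ j, w i j * Real.log (u i j) := by
        rw [← Finset.sum_add_distrib]
        refine Finset.sum_congr rfl fun i _ => ?_
        rw [← Finset.sum_add_distrib]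
        exact Finset.sum_congr rfl fun j _ => hsplit i j
      have h2 : ∑ i, ∑ j, w i j * Real.log (q j) = ∑ j, q j * Real.log (q j) := by
        rw [Finset.sum_comm]
        refine Finset.sum_congr rfl fun j _ => ?_
        rw [← Finset.sum_mul, hcol j]
      have hlogc : Real.log (T / ((d:ℝ) - 1)) = Real.log T - Real.log ((d:ℝ) - 1) :=
        Real.log_div (ne_of_gt hTpos) (ne_of_gt hd1')
      have h3 : ∑ i, ∑ j, w i j * Real.log (u i j)
          = T * Real.log T - T * Real.log ((d:ℝ)-1) + (1 - T) * Real.log (1 - T) := by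
        have hpt : ∀ i j, w i j * Real.log (u i j)
            = w i j * Real.log (T / ((d:ℝ)-1))
              + (if i = j then w i i * (Real.log (1-T) - Real.log (T / ((d:ℝ)-1))) else 0) := by
          intro i j
          rcases eq_or_ne i j with h | h
          · subst h
            have h1 : u i i = 1 - T := by simp [hu]
            rw [h1, if_pos rfl]; ring
          · have h1 : u i j = T / ((d:ℝ)-1) := by simp [hu, h]
            rw [h1, if_neg h]; ring
        calc ∑ i, ∑ j, w i j * Real.log (u i j)
            = ∑ i, ∑ j, (w i j * Real.log (T / ((d:ℝ)-1))
              + (if i = j then w i i * (Real.log (1-T) - Real.log (T / ((d:ℝ)-1))) else 0)) := by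
              exact Finset.sum_congr rfl fun i _ => Finset.sum_congr rfl fun j _ => hpt i j
          _ = (∑ i, ∑ j, w i j * Real.log (T / ((d:ℝ)-1)))
              + ∑ i, ∑ j, (if i = j then w i i * (Real.log (1-T) - Real.log (T / ((d:ℝ)-1))) else 0) := by
              rw [← Finset.sum_add_distrib]
              refine Finset.sum_congr rfl fun i _ => ?_
              rw [← Finset.sum_add_distrib]
          _ = Real.log (T / ((d:ℝ)-1))
              + (1 - T) * (Real.log (1-T) - Real.log (T / ((d:ℝ)-1))) := by
              congr 1
              · have : ∀ i, ∑ j, w i j * Real.log (T / ((d:ℝ)-1))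
                    = p i * Real.log (T / ((d:ℝ)-1)) := by
                  intro i; rw [← Finset.sum_mul, hrow i]
                rw [Finset.sum_congr rfl fun i _ => this i, ← Finset.sum_mul, hpsum, one_mul]
              · have : ∀ i, ∑ j, (if i = j then w i i * (Real.log (1-T) - Real.log (T / ((d:ℝ)-1))) else 0)
                    = w i i * (Real.log (1-T) - Real.log (T / ((d:ℝ)-1))) := by
                  intro i
                  rw [Finset.sum_ite_eq]
                  simp
                rw [Finset.sum_congr rfl fun i _ => this i, ← Finset.sum_mul, hdiagsum]
          _ = T * Real.log T - T * Real.log ((d:ℝ)-1) + (1 - T) * Real.log (1 - T) := by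
              rw [hlogc]; ring
      rw [h1, h2, h3]
    have := hgibbs
    rw [hcompute] at this
    have hfinal := le_trans this hmono
    -- conclude
    have e1 : -T * Real.log T = -(T * Real.log T) := by ring
    rw [e1]
    linarith [hfinal]

/-- **The Fannes–Audenaert inequality for probability vectors.**
For probability vectors `p` and `q` on `d ≥ 2` outcomes, with
`T = (1/2) * ∑ i, |p i - q i|` and Shannon entropies in bits,
`|H(p) - H(q)| ≤ T * log₂ (d-1) + H_b(T)` where
`H_b(t) = -t * log₂ t - (1-t) * log₂ (1-t)` is the binary entropy
(with the conventions `H_b 0 = H_b 1 = 0`, which hold since `log₂ 0 = 0` in Lean). -/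
theorem fannes_audenaert
    (d : ℕ) (hd : 2 ≤ d) (p q : Fin d → ℝ)
    (hp : ∀ i, 0 ≤ p i) (hpsum : ∑ i, p i = 1)
    (hq : ∀ i, 0 ≤ q i) (hqsum : ∑ i, q i = 1) :
    |(- ∑ i, p i * Real.logb 2 (p i)) - (- ∑ i, q i * Real.logb 2 (q i))| ≤
      ((1 / 2) * ∑ i, |p i - q i|) * Real.logb 2 ((d : ℝ) - 1) +
        (-(((1 / 2) * ∑ i, |p i - q i|)) * Real.logb 2 ((1 / 2) * ∑ i, |p i - q i|)
          - (1 - (1 / 2) * ∑ i, |p i - q i|) *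
              Real.logb 2 (1 - (1 / 2) * ∑ i, |p i - q i|)) := by
  have hL : (0:ℝ) < Real.log 2 := Real.log_pos one_lt_two
  have h1 := key d hd p q hp hpsum hq hqsum
  have h2 := key d hd q p hq hqsum hp hpsum
  have hsymm : ∑ i, |q i - p i| = ∑ i, |p i - q i| :=
    Finset.sum_congr rfl fun i _ => abs_sub_comm _ _
  rw [hsymm] at h2
  have habs : |(- ∑ i, p i * Real.log (p i)) - (- ∑ i, q i * Real.log (q i))| ≤
      ((1 / 2) * ∑ i, |p i - q i|) * Real.log ((d : ℝ) - 1) +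
        (-(((1 / 2) * ∑ i, |p i - q i|)) * Real.log ((1 / 2) * ∑ i, |p i - q i|)
          - (1 - (1 / 2) * ∑ i, |p i - q i|) *
              Real.log (1 - (1 / 2) * ∑ i, |p i - q i|)) := by
    rw [abs_sub_le_iff]
    constructor
    · exact h1
    · calc (- ∑ i, q i * Real.log (q i)) - (- ∑ i, p i * Real.log (p i)) ≤ _ := h2
        _ = _ := by ring
  have hsum_p : ∑ i, p i * Real.logb 2 (p i) = (∑ i, p i * Real.log (p i)) / Real.log 2 := by
    rw [Finset.sum_div]
    exact Finset.sum_congr rfl fun i _ => by rw [Real.logb, mul_div_assoc]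
  have hsum_q : ∑ i, q i * Real.logb 2 (q i) = (∑ i, q i * Real.log (q i)) / Real.log 2 := by
    rw [Finset.sum_div]
    exact Finset.sum_congr rfl fun i _ => by rw [Real.logb, mul_div_assoc]
  rw [hsum_p, hsum_q]
  simp only [Real.logb]
  rw [show (-((∑ i, p i * Real.log (p i)) / Real.log 2))
        - (-((∑ i, q i * Real.log (q i)) / Real.log 2))
      = ((- ∑ i, p i * Real.log (p i)) - (- ∑ i, q i * Real.log (q i))) / Real.log 2 by ring]
  rw [abs_div, abs_of_pos hL]
  rw [show ((1 / 2) * ∑ i, |p i - q i|) * (Real.log ((d : ℝ) - 1) / Real.log 2) +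
        (-(((1 / 2) * ∑ i, |p i - q i|)) * (Real.log ((1 / 2) * ∑ i, |p i - q i|) / Real.log 2)
          - (1 - (1 / 2) * ∑ i, |p i - q i|) *
              (Real.log (1 - (1 / 2) * ∑ i, |p i - q i|) / Real.log 2))
      = (((1 / 2) * ∑ i, |p i - q i|) * Real.log ((d : ℝ) - 1) +
        (-(((1 / 2) * ∑ i, |p i - q i|)) * Real.log ((1 / 2) * ∑ i, |p i - q i|)
          - (1 - (1 / 2) * ∑ i, |p i - q i|) *
              Real.log (1 - (1 / 2) * ∑ i, |p i - q i|))) / Real.log 2 by ring]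
  gcongr
end

section
/- Let ρ and σ be density matrices on ℂ^{m·n}, indexed by pairs (i, j) with i ranging over m values (subsystem A) and j over n values (subsystem B). Define the partial trace over B by (Tr_B X)_{i,i'} = ∑_j X_{(i,j),(i',j)}. Then the trace norm is monotone under partial trace: the sum of the absolute values of the eigenvalues of the Hermitian matrix Tr_B(ρ − σ) is at most the sum of the absolute values of the eigenvalues of the Hermitian matrix ρ − σ, i.e. ‖Tr_B(ρ) − Tr_B(σ)‖₁ ≤ ‖ρ − σ‖₁. -/
open Real Finset
open scoped ComplexOrder

/-- The partial trace over the second tensor factor (subsystem `B`):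
`(Tr_B X) i i' = ∑ j, X (i, j) (i', j)`. -/
noncomputable def ptraceB (m n : ℕ) (X : Matrix (Fin m × Fin n) (Fin m × Fin n) ℂ) :
    Matrix (Fin m) (Fin m) ℂ :=
  Matrix.of fun i i' => ∑ j : Fin n, X (i, j) (i', j)

private lemma sum4_rev {M : Type*} [AddCommMonoid M] {α β γ δ : Type*}
    [Fintype α] [Fintype β] [Fintype γ] [Fintype δ] (f : α → β → γ → δ → M) :
    ∑ a, ∑ b, ∑ c, ∑ d, f a b c d = ∑ d, ∑ c, ∑ b, ∑ a, f a b c d := by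
  calc ∑ a, ∑ b, ∑ c, ∑ d, f a b c d
      = ∑ a, ∑ b, ∑ d, ∑ c, f a b c d :=
        Finset.sum_congr rfl fun a _ => Finset.sum_congr rfl fun b _ => Finset.sum_comm
    _ = ∑ a, ∑ d, ∑ b, ∑ c, f a b c d := Finset.sum_congr rfl fun a _ => Finset.sum_comm
    _ = ∑ d, ∑ a, ∑ b, ∑ c, f a b c d := Finset.sum_comm
    _ = ∑ d, ∑ a, ∑ c, ∑ b, f a b c d :=
        Finset.sum_congr rfl fun d _ => Finset.sum_congr rfl fun a _ => Finset.sum_comm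
    _ = ∑ d, ∑ c, ∑ a, ∑ b, f a b c d := Finset.sum_congr rfl fun d _ => Finset.sum_comm
    _ = ∑ d, ∑ c, ∑ b, ∑ a, f a b c d :=
        Finset.sum_congr rfl fun d _ => Finset.sum_congr rfl fun c _ => Finset.sum_comm

/-- **Monotonicity of the trace norm under the partial trace.**
For density matrices `ρ`, `σ` on `ℂ^(m·n)`, the sum of the absolute values of the
eigenvalues of the Hermitian matrix `Tr_B ρ - Tr_B σ = Tr_B (ρ - σ)` is at most the sum
of the absolute values of the eigenvalues of the Hermitian matrix `ρ - σ`, i.e.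
`‖Tr_B ρ - Tr_B σ‖₁ ≤ ‖ρ - σ‖₁`. -/
theorem traceNorm_ptraceB_le
    (m n : ℕ)
    (ρ σ : Matrix (Fin m × Fin n) (Fin m × Fin n) ℂ)
    (hρ : ρ.PosSemidef) (htρ : ρ.trace = 1)
    (hσ : σ.PosSemidef) (htσ : σ.trace = 1)
    (hAB : (ptraceB m n ρ - ptraceB m n σ).IsHermitian) :
    ∑ i, |hAB.eigenvalues i| ≤
      ∑ i, |(hρ.isHermitian.sub hσ.isHermitian).eigenvalues i| := by
  classical
  set hΔ := hρ.isHermitian.sub hσ.isHermitian with hΔdef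
  set lam := hAB.eigenvalues with hlamdef
  set mu := hΔ.eigenvalues with hmudef
  set V : Matrix (Fin m) (Fin m) ℂ := (hAB.eigenvectorUnitary : Matrix (Fin m) (Fin m) ℂ)
    with hVdef
  set W : Matrix (Fin m × Fin n) (Fin m × Fin n) ℂ :=
    (hΔ.eigenvectorUnitary : Matrix (Fin m × Fin n) (Fin m × Fin n) ℂ) with hWdef
  have hVV : V * star V = 1 := (Matrix.mem_unitaryGroup_iff).mp hAB.eigenvectorUnitary.2
  have hWW : star W * W = 1 := (Matrix.mem_unitaryGroup_iff').mp hΔ.eigenvectorUnitary.2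
  -- entries of ρ - σ via the spectral theorem
  have hΔentry : ∀ p q, (ρ - σ) p q = ∑ k, W p k * (mu k : ℂ) * (starRingEnd ℂ) (W q k) := by
    intro p q
    conv_lhs => rw [hΔ.spectral_theorem, Unitary.conjStarAlgAut_apply]
    rw [Matrix.mul_apply]
    refine Finset.sum_congr rfl fun k _ => ?_
    rw [Matrix.mul_diagonal]
    simp [Matrix.star_apply, Function.comp, hWdef, hmudef]
  -- entries of the partial trace
  have hM : ∀ a a' : Fin m, (ptraceB m n ρ - ptraceB m n σ) a a' = ∑ j, (ρ - σ) (a, j) (a', j) := by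
    intro a a'
    simp [ptraceB, Matrix.sub_apply, Finset.sum_sub_distrib]
  -- eigenvalues of the partial trace via the spectral theorem
  have hlam_eq : ∀ i, ((lam i : ℝ) : ℂ) =
      ∑ a', (∑ a, (starRingEnd ℂ) (V a i) * (ptraceB m n ρ - ptraceB m n σ) a a') * V a' i := by
    intro i
    have h2 : (star V * (ptraceB m n ρ - ptraceB m n σ) * V) i i
        = (Matrix.diagonal (RCLike.ofReal ∘ lam)) i i := by
      rw [← hAB.conjStarAlgAut_star_eigenvectorUnitary, Unitary.conjStarAlgAut_star_apply]
    rw [Matrix.diagonal_apply_eq] at h2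
    refine (show ((lam i : ℝ) : ℂ)
        = (star V * (ptraceB m n ρ - ptraceB m n σ) * V) i i from h2.symm).trans ?_
    rw [Matrix.mul_apply]
    refine Finset.sum_congr rfl fun a' _ => ?_
    rw [Matrix.mul_apply]
    refine congrArg (· * V a' i) (Finset.sum_congr rfl fun a _ => ?_)
    rw [Matrix.star_apply]
    rfl
  set t : Fin m → Fin n → (Fin m × Fin n) → ℂ :=
    fun i j k => ∑ a, (starRingEnd ℂ) (V a i) * W (a, j) k with htdef
  set r : Fin m → (Fin m × Fin n) → ℝ := fun i k => ∑ j, Complex.normSq (t i j k) with hrdef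
  have hr_nonneg : ∀ i k, 0 ≤ r i k := fun i k =>
    Finset.sum_nonneg fun j _ => Complex.normSq_nonneg _
  have ht_conj : ∀ i j k, (starRingEnd ℂ) (t i j k)
      = ∑ a', V a' i * (starRingEnd ℂ) (W (a', j) k) := by
    intro i j k
    rw [htdef]
    simp [map_sum]
  -- Claim A : complex version
  have claimA : ∀ i, ((lam i : ℝ) : ℂ) = ∑ k, (mu k : ℂ) * ((r i k : ℝ) : ℂ) := by
    intro i
    have e1 : ((lam i : ℝ) : ℂ) = ∑ a', ∑ a, ∑ j, ∑ k,
        (starRingEnd ℂ) (V a i) * W (a, j) k * (mu k : ℂ)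
          * (starRingEnd ℂ) (W (a', j) k) * V a' i := by
      rw [hlam_eq i]
      simp only [hM, hΔentry, Finset.mul_sum, Finset.sum_mul]
      exact Finset.sum_congr rfl fun a' _ => Finset.sum_congr rfl fun a _ =>
        Finset.sum_congr rfl fun j _ => Finset.sum_congr rfl fun k _ => by ring
    rw [e1, sum4_rev]
    refine Finset.sum_congr rfl fun k _ => ?_
    have hrc : ((r i k : ℝ) : ℂ) = ∑ j, t i j k * (starRingEnd ℂ) (t i j k) := by
      rw [hrdef]
      push_cast
      exact Finset.sum_congr rfl fun j _ => (Complex.mul_conj _).symm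
    rw [hrc, Finset.mul_sum]
    refine Finset.sum_congr rfl fun j _ => ?_
    rw [ht_conj, htdef]
    simp only []
    rw [Finset.sum_mul_sum, Finset.mul_sum]
    refine Finset.sum_congr rfl fun a _ => ?_
    rw [Finset.mul_sum]
    exact Finset.sum_congr rfl fun a' _ => by ring
  have claimA' : ∀ i, lam i = ∑ k, mu k * r i k := by
    intro i
    exact_mod_cast claimA i
  -- orthonormality of columns of V
  have horth : ∀ a a' : Fin m, ∑ i, (starRingEnd ℂ) (V a i) * V a' i
      = if a' = a then 1 else 0 := by
    intro a a'
    have h2 : (V * star V) a' a = (1 : Matrix (Fin m) (Fin m) ℂ) a' a := by rw [hVV]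
    rw [Matrix.mul_apply, Matrix.one_apply] at h2
    rw [← h2]
    exact Finset.sum_congr rfl fun i _ => by
      rw [Matrix.star_apply, RCLike.star_def]; ring
  -- Claim B : columns of (V ⊗ 1)ᴴ W are unit vectors
  have claimB : ∀ k, ∑ i, r i k = 1 := by
    intro k
    have hc : (∑ i, ((r i k : ℝ) : ℂ)) = 1 := by
      have e1 : ∀ i, ((r i k : ℝ) : ℂ) = ∑ j, t i j k * (starRingEnd ℂ) (t i j k) := by
        intro i
        rw [hrdef]
        push_cast
        exact Finset.sum_congr rfl fun j _ => (Complex.mul_conj _).symm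
      simp only [e1]
      have e2 : ∀ j, ∑ i, t i j k * (starRingEnd ℂ) (t i j k)
          = ∑ a, W (a, j) k * (starRingEnd ℂ) (W (a, j) k) := by
        intro j
        have e3 : ∀ i, t i j k * (starRingEnd ℂ) (t i j k)
            = ∑ a, ∑ a', (starRingEnd ℂ) (V a i) * V a' i
                * (W (a, j) k * (starRingEnd ℂ) (W (a', j) k)) := by
          intro i
          rw [ht_conj, htdef]
          simp only []
          rw [Finset.sum_mul_sum]
          exact Finset.sum_congr rfl fun a _ => Finset.sum_congr rfl fun a' _ => by ring
        simp only [e3]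
        rw [Finset.sum_comm]
        refine Finset.sum_congr rfl fun a _ => ?_
        rw [Finset.sum_comm]
        have : ∀ a' : Fin m, ∑ i, (starRingEnd ℂ) (V a i) * V a' i
            * (W (a, j) k * (starRingEnd ℂ) (W (a', j) k))
            = (if a' = a then 1 else 0) * (W (a, j) k * (starRingEnd ℂ) (W (a', j) k)) := by
          intro a'
          rw [← Finset.sum_mul, horth]
        simp only [this, ite_mul, one_mul, zero_mul]
        simp
      rw [Finset.sum_comm]
      simp only [e2]
      have h2 : (star W * W) k k = (1 : Matrix (Fin m × Fin n) (Fin m × Fin n) ℂ) k k := by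
        rw [hWW]
      rw [Matrix.mul_apply, Matrix.one_apply_eq] at h2
      rw [Finset.sum_comm, ← Fintype.sum_prod_type', ← h2]
      refine Finset.sum_congr rfl fun p _ => ?_
      obtain ⟨a, j⟩ := p
      rw [Matrix.star_apply, RCLike.star_def]; ring
    exact_mod_cast hc
  -- final estimate
  calc ∑ i, |lam i| ≤ ∑ i, ∑ k, |mu k| * r i k := by
        refine Finset.sum_le_sum fun i _ => ?_
        rw [claimA' i]
        refine (Finset.abs_sum_le_sum_abs _ _).trans_eq ?_
        exact Finset.sum_congr rfl fun k _ => by rw [abs_mul, abs_of_nonneg (hr_nonneg i k)]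
    _ = ∑ k, |mu k| * ∑ i, r i k := by
        rw [Finset.sum_comm]
        exact Finset.sum_congr rfl fun k _ => (Finset.mul_sum _ _ _).symm
    _ = ∑ k, |mu k| := by simp [claimB]
end

section
/- Let R(θ) = [[cos θ, sin θ], [−sin θ, cos θ]] and CZ = diag(1, 1, 1, −1). Then for all real θ₁, θ₂, the gate O(θ₁, θ₂) = CZ · (R(θ₁) ⊗ R(θ₂)) maps the singlet vector (0, 1, −1, 0)ᵀ to cos(θ₁ − θ₂)·(0, 1, −1, 0)ᵀ − sin(θ₁ − θ₂)·(1, 0, 0, −1)ᵀ. In particular, the singlet direction is preserved exactly when sin(θ₁ − θ₂) = 0. -/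
open Real Matrix
open scoped Kronecker

/-- The single-qubit Pauli-`y` rotation `R(θ) = [[cos θ, sin θ], [-sin θ, cos θ]]`. -/
noncomputable def Rgate (θ : ℝ) : Matrix (Fin 2) (Fin 2) ℝ :=
  !![Real.cos θ, Real.sin θ; -Real.sin θ, Real.cos θ]

/-- The controlled-Z gate `CZ = diag (1, 1, 1, -1)` on the two-qubit computational basis
`|00⟩, |01⟩, |10⟩, |11⟩`. -/
def CZgate : Matrix (Fin 2 × Fin 2) (Fin 2 × Fin 2) ℝ :=
  Matrix.diagonal fun p => if p = (1, 1) then -1 else 1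

/-- The 2-qubit gate `O(θ₁, θ₂) = CZ · (R(θ₁) ⊗ R(θ₂))`. -/
noncomputable def Ogate (θ₁ θ₂ : ℝ) : Matrix (Fin 2 × Fin 2) (Fin 2 × Fin 2) ℝ :=
  CZgate * (Rgate θ₁ ⊗ₖ Rgate θ₂)

/-- The singlet vector `v = (0, 1, -1, 0)ᵀ`. -/
def singletVec : Fin 2 × Fin 2 → ℝ :=
  fun p => if p = (0, 1) then 1 else if p = (1, 0) then -1 else 0

/-- The vector `w = (1, 0, 0, -1)ᵀ`, i.e. `|00⟩ - |11⟩`. -/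
def wVec : Fin 2 × Fin 2 → ℝ :=
  fun p => if p = (0, 0) then 1 else if p = (1, 1) then -1 else 0

/-- **Action of the 2-qubit gate on the singlet vector.**
For all real `θ₁, θ₂`, the gate `O(θ₁, θ₂) = CZ · (R(θ₁) ⊗ R(θ₂))` maps the singlet vector
`(0, 1, -1, 0)ᵀ` to `cos (θ₁ - θ₂) • (0, 1, -1, 0)ᵀ - sin (θ₁ - θ₂) • (1, 0, 0, -1)ᵀ`.
In particular, the singlet direction is preserved exactly when `sin (θ₁ - θ₂) = 0`. -/
theorem ogate_mulVec_singlet (θ₁ θ₂ : ℝ) :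
    (Ogate θ₁ θ₂).mulVec singletVec =
        Real.cos (θ₁ - θ₂) • singletVec - Real.sin (θ₁ - θ₂) • wVec ∧
      ((∃ c : ℝ, (Ogate θ₁ θ₂).mulVec singletVec = c • singletVec) ↔
        Real.sin (θ₁ - θ₂) = 0) := by
  have heq : (Ogate θ₁ θ₂).mulVec singletVec =
      Real.cos (θ₁ - θ₂) • singletVec - Real.sin (θ₁ - θ₂) • wVec := by
    funext p
    fin_cases p <;>
      simp [Ogate, CZgate, Rgate, singletVec, wVec, mulVec, Matrix.mul_apply,
        Fintype.sum_prod_type, Fin.sum_univ_two, dotProduct, Real.cos_sub, Real.sin_sub,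
        Matrix.diagonal_apply, Prod.ext_iff] <;> ring
  refine ⟨heq, ?_, fun h => ⟨Real.cos (θ₁ - θ₂), by simp [heq, h]⟩⟩
  rintro ⟨c, hc⟩
  have := congrFun (heq.symm.trans hc) (0, 0)
  simpa [singletVec, wVec, Prod.ext_iff] using this
end
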